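/- Let p be a prime and let X be a Noetherian scheme over F_p (i.e., every ring of sections O_X(U) has characteristic p or is the zero ring). Then X is semi F-regular — meaning O_X(U) is semi F-regular for every affine open U of X — if and only if there exists a cover of X by affine open subsets {U_α}_{α∈A} such that O_X(U_α) is semi F-regular for every α ∈ A. -/

import Mathlib

/-- `offMinimal S` is `S°`, the set of elements of `S` lying outside every minimal prime. -/
def offMinimal (S : Type*) [CommRing S] : Set S :=
  {c : S | ∀ P ∈ minimalPrimes S, c ∉ P}

/-- The bracket power `J^[q]`, generated by `q`-th powers of elements of `J`. -/
def bracketPow {S : Type*} [CommRing S] (J : Ideal S) (q : ℕ) : Ideal S :=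
  Ideal.span ((fun a => a ^ q) '' (J : Set S))

/-- The tight closure `J^*` of an ideal `J` in a ring of characteristic `p`. -/
def tightClosure (p : ℕ) {S : Type*} [CommRing S] (J : Ideal S) : Set S :=
  {z : S | ∃ c ∈ offMinimal S, ∃ e₀ : ℕ, ∀ e : ℕ, e₀ ≤ e →
    c * z ^ p ^ e ∈ bracketPow J (p ^ e)}

/-- A ring `S` is weakly F-regular (with respect to `p`) if every ideal is tightly closed. -/
def WeaklyFRegular (p : ℕ) (S : Type*) [CommRing S] : Prop :=
  ∀ J : Ideal S, tightClosure p J = (J : Set S)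

/-- A ring `S` is semi F-regular (with respect to `p`) if for every `f ∈ S` the localization
`S_f` is weakly F-regular. -/
def SemiFRegular (p : ℕ) (S : Type*) [CommRing S] : Prop :=
  ∀ f : S, WeaklyFRegular p (Localization.Away f)

section Aux

variable {p : ℕ}

lemma one_mem_offMinimal {S : Type*} [CommRing S] : (1 : S) ∈ offMinimal S :=
  fun P hP h => hP.1.1.ne_top (P.eq_top_iff_one.mpr h)

lemma subset_tightClosure {S : Type*} [CommRing S] (J : Ideal S) :
    (J : Set S) ⊆ tightClosure p J := by
  intro z hz
  exact ⟨1, one_mem_offMinimal, 0, fun e _ => by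
    rw [one_mul]
    exact Ideal.subset_span ⟨z, hz, rfl⟩⟩

lemma map_bracketPow_le {S T : Type*} [CommRing S] [CommRing T] (φ : S →+* T)
    (J : Ideal S) (q : ℕ) :
    (bracketPow J q).map φ ≤ bracketPow (J.map φ) q := by
  rw [bracketPow, Ideal.map_span]
  apply Ideal.span_le.mpr
  rintro _ ⟨_, ⟨a, ha, rfl⟩, rfl⟩
  rw [map_pow]
  exact Ideal.subset_span ⟨φ a, Ideal.mem_map_of_mem φ ha, rfl⟩

lemma tightClosure_map {S T : Type*} [CommRing S] [CommRing T] (φ : S →+* T)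
    (hoff : ∀ c ∈ offMinimal S, φ c ∈ offMinimal T) {J : Ideal S} {z : S}
    (hz : z ∈ tightClosure p J) : φ z ∈ tightClosure p (J.map φ) := by
  obtain ⟨c, hc, e₀, h⟩ := hz
  exact ⟨φ c, hoff c hc, e₀, fun e he => by
    rw [← map_pow, ← map_mul]
    exact map_bracketPow_le φ J _ (Ideal.mem_map_of_mem φ (h e he))⟩

lemma offMinimal_equiv {S T : Type*} [CommRing S] [CommRing T] (e : S ≃+* T) {c : S}
    (hc : c ∈ offMinimal S) : e c ∈ offMinimal T := by
  intro P hP hmem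
  have h1 : P.comap (e : S →+* T) ∈ minimalPrimes S := by
    have h2 := Ideal.comap_minimalPrimes_eq_of_surjective (f := (e : S →+* T))
      e.surjective (⊥ : Ideal T)
    have h3 : (⊥ : Ideal T).comap (e : S →+* T) = (⊥ : Ideal S) := by
      rw [← RingHom.ker_eq_comap_bot, RingHom.ker_coe_equiv]
    rw [h3] at h2
    rw [show minimalPrimes S = (⊥ : Ideal S).minimalPrimes from rfl, h2]
    exact ⟨P, hP, rfl⟩
  exact hc _ h1 (Ideal.mem_comap.mpr hmem)

lemma weaklyFRegular_congr {S T : Type*} [CommRing S] [CommRing T] (e : S ≃+* T)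
    (h : WeaklyFRegular p S) : WeaklyFRegular p T := by
  intro J
  refine subset_antisymm ?_ (subset_tightClosure J)
  intro z hz
  have h1 : e.symm z ∈ tightClosure p (J.map (e.symm : T →+* S)) :=
    tightClosure_map (e.symm : T →+* S) (fun c hc => offMinimal_equiv e.symm hc) hz
  rw [Ideal.map_comap_of_equiv e.symm] at h1
  rw [h (J.comap e.symm.symm)] at h1
  have h2 : e.symm.symm (e.symm z) ∈ J := Ideal.mem_comap.mp h1
  simpa using h2

lemma semiFRegular_congr {S T : Type*} [CommRing S] [CommRing T] (e : S ≃+* T)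
    (h : SemiFRegular p S) : SemiFRegular p T := by
  intro g
  refine weaklyFRegular_congr ?_ (h (e.symm g))
  exact IsLocalization.ringEquivOfRingEquiv (M := Submonoid.powers (e.symm g))
    (T := Submonoid.powers g) (Localization.Away (e.symm g))
    (Localization.Away g) e
    (by rw [Submonoid.map_powers]
        exact congrArg Submonoid.powers (e.apply_symm_apply g))

lemma offMinimal_isLocalization {R S : Type*} [CommRing R] [CommRing S] (M : Submonoid R)
    [Algebra R S] [IsLocalization M S] {c : R} (hc : c ∈ offMinimal R) :
    algebraMap R S c ∈ offMinimal S := by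
  intro P hP hmem
  have hP' : P.IsPrime := hP.1.1
  have hQ : (P.comap (algebraMap R S)).IsPrime ∧
      Disjoint (M : Set R) (P.comap (algebraMap R S) : Set R) :=
    (IsLocalization.isPrime_iff_isPrime_disjoint M S P).1 hP'
  haveI := hQ.1
  obtain ⟨Q₀, hQ₀min, hQ₀le⟩ :=
    Ideal.exists_minimalPrimes_le (bot_le : (⊥ : Ideal R) ≤ P.comap (algebraMap R S))
  have hQ₀prime : Q₀.IsPrime := hQ₀min.1.1
  have hdisj : Disjoint (M : Set R) (Q₀ : Set R) :=
    hQ.2.mono_right (fun x hx => hQ₀le hx)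
  have hP₀prime := IsLocalization.isPrime_of_isPrime_disjoint M S Q₀ hQ₀prime hdisj
  have hle : Q₀.map (algebraMap R S) ≤ P := Ideal.map_le_iff_le_comap.mpr hQ₀le
  have hge : P ≤ Q₀.map (algebraMap R S) := hP.2 ⟨hP₀prime, bot_le⟩ hle
  have hPeq : P = Q₀.map (algebraMap R S) := le_antisymm hge hle
  have hcomap : (Q₀.map (algebraMap R S)).comap (algebraMap R S) = Q₀ :=
    IsLocalization.comap_map_of_isPrime_disjoint M S hQ₀prime hdisj
  have : c ∈ Q₀ := by
    rw [← hcomap]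
    exact Ideal.mem_comap.mpr (hPeq ▸ hmem)
  exact hc Q₀ hQ₀min this

lemma weaklyFRegular_of_cover {S : Type*} [CommRing S] {ι : Type*} (f : ι → S)
    (hspan : Ideal.span (Set.range f) = ⊤)
    (h : ∀ i, WeaklyFRegular p (Localization.Away (f i))) : WeaklyFRegular p S := by
  intro J
  refine subset_antisymm ?_ (subset_tightClosure J)
  intro z hz
  have key : ∀ i, ∃ n : ℕ, f i ^ n * z ∈ J := by
    intro i
    have h1 : algebraMap S (Localization.Away (f i)) z ∈
        tightClosure p (J.map (algebraMap S (Localization.Away (f i)))) :=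
      tightClosure_map _
        (fun c hc => offMinimal_isLocalization (Submonoid.powers (f i)) hc) hz
    rw [h i (J.map (algebraMap S (Localization.Away (f i))))] at h1
    obtain ⟨⟨j, m⟩, hm⟩ :=
      (IsLocalization.mem_map_algebraMap_iff (Submonoid.powers (f i))
        (Localization.Away (f i))).1 h1
    rw [← map_mul] at hm
    obtain ⟨n, hn⟩ :=
      (IsLocalization.eq_iff_exists (Submonoid.powers (f i))
        (Localization.Away (f i))).1 hm
    obtain ⟨k, hk⟩ := m.2
    obtain ⟨l, hl⟩ := n.2
    refine ⟨l + k, ?_⟩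
    have hk' : f i ^ k = (m : S) := hk
    have hl' : f i ^ l = (n : S) := hl
    have h2 : f i ^ l * (z * f i ^ k) = f i ^ l * (j : S) := by
      rw [hl', hk']; exact hn
    have h3 : f i ^ (l + k) * z = f i ^ l * (j : S) := by
      rw [← h2]; ring
    rw [h3]
    exact J.mul_mem_left _ j.2
  have hK : J.colon (Ideal.span {z}) = ⊤ := by
    rw [← Ideal.radical_eq_top]
    rw [eq_top_iff, ← hspan, Ideal.span_le]
    rintro _ ⟨i, rfl⟩
    obtain ⟨n, hn⟩ := key i
    exact Ideal.mem_radical_iff.mpr ⟨n, Ideal.mem_colon_span_singleton.mpr hn⟩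
  have h1 : (1 : S) ∈ J.colon (Ideal.span {z}) := hK ▸ Submodule.mem_top
  simpa using Ideal.mem_colon_span_singleton.mp h1

lemma semiFRegular_of_cover {S : Type*} [CommRing S] {ι : Type*} (f : ι → S)
    (hspan : Ideal.span (Set.range f) = ⊤)
    (h : ∀ i, SemiFRegular p (Localization.Away (f i))) : SemiFRegular p S := by
  intro g
  apply weaklyFRegular_of_cover (fun i => algebraMap S (Localization.Away g) (f i))
  · have : Set.range (fun i => algebraMap S (Localization.Away g) (f i)) =
        algebraMap S (Localization.Away g) '' Set.range f := by
      rw [← Set.range_comp]; rfl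
    rw [this, ← Ideal.map_span, hspan, Ideal.map_top]
  · intro i
    have h2 := h i (algebraMap S (Localization.Away (f i)) g)
    exact weaklyFRegular_congr
      (IsLocalization.algEquiv (Submonoid.powers (g * f i))
        (Localization.Away (algebraMap S (Localization.Away (f i)) g))
        (Localization.Away (algebraMap S (Localization.Away g) (f i)))).toRingEquiv h2

lemma SemiFRegular.away {R : Type*} [CommRing R] (h : SemiFRegular p R) (g : R) :
    SemiFRegular p (Localization.Away g) := by
  intro s
  obtain ⟨n, a, ha⟩ := IsLocalization.Away.surj (S := Localization.Away g) g s
  have hassoc : Associated s (algebraMap R (Localization.Away g) a) := by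
    refine ⟨(IsLocalization.Away.algebraMap_pow_isUnit (S := Localization.Away g) g n).unit, ?_⟩
    rw [IsUnit.unit_spec]; exact ha
  haveI : IsLocalization.Away (algebraMap R (Localization.Away g) a)
      (Localization.Away s) := IsLocalization.Away.of_associated hassoc
  haveI : IsLocalization.Away (a * g) (Localization.Away s) :=
    IsLocalization.Away.mul (Localization.Away g) (Localization.Away s) g a
  exact weaklyFRegular_congr
    (IsLocalization.algEquiv (Submonoid.powers (a * g))
      (Localization.Away (a * g)) (Localization.Away s)).toRingEquiv (h (a * g))

end Aux

open AlgebraicGeometry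

/-- a Noetherian scheme over `𝔽_p` (every ring of sections has characteristic
`p` or is the zero ring) is semi F-regular (every ring of sections over an affine open is
semi F-regular) iff it has a cover by affine opens with semi F-regular rings of sections. -/
theorem scheme_semiFRegular_iff_exists_affine_cover (p : ℕ) (hp : p.Prime)
    (X : Scheme.{u}) [AlgebraicGeometry.IsNoetherian X]
    (hchar : ∀ U : X.Opens, CharP Γ(X, U) p ∨ Subsingleton Γ(X, U)) :
    (∀ U : X.Opens, IsAffineOpen U → SemiFRegular p Γ(X, U)) ↔
    (∃ (ι : Type u) (U : ι → X.Opens), (∀ α, IsAffineOpen (U α)) ∧ (⨆ α, U α) = ⊤ ∧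
      ∀ α, SemiFRegular p Γ(X, U α)) := by
  constructor
  · intro h
    exact ⟨X.affineOpens, fun U => U.1, fun U => U.2, iSup_affineOpens_eq_top X,
      fun U => h U.1 U.2⟩
  · rintro ⟨ι, U, haff, hcover, hsf⟩ V hV
    set s : Set Γ(X, V) := {f | SemiFRegular p (Localization.Away f)} with hs
    have hcov : ⨆ f : s, X.basicOpen (f : Γ(X, V)) = V := by
      apply le_antisymm
      · exact iSup_le fun f => X.basicOpen_le _
      · intro x hx
        have hx' : x ∈ (⊤ : X.Opens) := trivial
        rw [← hcover] at hx'
        obtain ⟨α, hα⟩ := TopologicalSpace.Opens.mem_iSup.mp hx'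
        obtain ⟨f, g, hfg, hxf⟩ :=
          exists_basicOpen_le_affine_inter hV (haff α) x ⟨hx, hα⟩
        haveI hloc1 : IsLocalization.Away f Γ(X, X.basicOpen f) :=
          hV.isLocalization_basicOpen f
        haveI hloc2 : IsLocalization.Away g Γ(X, X.basicOpen g) :=
          (haff α).isLocalization_basicOpen g
        have hsg : SemiFRegular p Γ(X, X.basicOpen g) :=
          semiFRegular_congr
            (IsLocalization.algEquiv (Submonoid.powers g)
              (Localization.Away g) Γ(X, X.basicOpen g)).toRingEquiv
            ((hsf α).away g)
        have hsf' : SemiFRegular p Γ(X, X.basicOpen f) := by rw [hfg]; exact hsg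
        have hmem : f ∈ s :=
          semiFRegular_congr
            (IsLocalization.algEquiv (Submonoid.powers f)
              Γ(X, X.basicOpen f) (Localization.Away f)).toRingEquiv hsf'
        exact TopologicalSpace.Opens.mem_iSup.mpr ⟨⟨f, hmem⟩, hxf⟩
    have hspan : Ideal.span s = ⊤ := (hV.iSup_basicOpen_eq_self_iff (s := s)).1 hcov
    exact semiFRegular_of_cover (fun f : s => (f : Γ(X, V)))
      (by rwa [Subtype.range_coe]) (fun f => f.2)
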